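/- For any n×n real matrix A, the limit as p → ∞ of (Σ_{σ∈S_n} sgn(σ) Π_{i∈[n]} a_{i,σ(i)}^{2p+1})^{1/(2p+1)} (real odd roots) exists and equals ⊞_{σ∈S_n} ( sgn(σ) Π_{i∈[n]} a_{i,σ(i)} ), the 'determinant in limit' |A|_∞. -/

import Mathlib

open scoped Classical

/-- ξ_I[x](α): signed count of occurrences of α among the x i, i ∈ I. -/
noncomputable def xiF {ι : Type*} (I : Finset ι) (x : ι → ℝ) (α : ℝ) : ℤ :=
  ((I.filter fun i => x i = α).card : ℤ) - ((I.filter fun i => x i = -α).card : ℤ)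

/-- the n-ary limit operation F_I, i.e. ⊞_{i∈I} x_i. -/
noncomputable def FF {ι : Type*} (I : Finset ι) (x : ι → ℝ) : ℝ :=
  if h : (I.filter fun j => xiF I x (x j) ≠ 0).Nonempty then
    if 0 < xiF I x ((I.filter fun j => xiF I x (x j) ≠ 0).sup' h fun i => |x i|) then
      (I.filter fun j => xiF I x (x j) ≠ 0).sup' h x
    else if xiF I x ((I.filter fun j => xiF I x (x j) ≠ 0).sup' h fun i => |x i|) < 0 then
      (I.filter fun j => xiF I x (x j) ≠ 0).inf' h x
    else 0
  else 0

/-- determinant in limit -/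
noncomputable def detInf {n : ℕ} (A : Matrix (Fin n) (Fin n) ℝ) : ℝ :=
  FF Finset.univ fun σ : Equiv.Perm (Fin n) =>
    ((Equiv.Perm.sign σ : ℤ) : ℝ) * ∏ i, A i (σ i)

open Filter

lemma xiF_neg {ι : Type*} (I : Finset ι) (x : ι → ℝ) (α : ℝ) :
    xiF I x (-α) = - xiF I x α := by
  simp [xiF, neg_neg]

lemma xiF_zero {ι : Type*} (I : Finset ι) (x : ι → ℝ) : xiF I x 0 = 0 := by
  simp [xiF]

lemma xiF_abs_ne {ι : Type*} (I : Finset ι) (x : ι → ℝ) (a : ℝ) :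
    xiF I x |a| ≠ 0 ↔ xiF I x a ≠ 0 := by
  rcases abs_choice a with h | h
  · rw [h]
  · rw [h, xiF_neg]; simp

/-- key decomposition of odd-power sums -/
lemma key_sum {ι : Type*} (I : Finset ι) (x : ι → ℝ) (p : ℕ) :
    ∑ i ∈ I, x i ^ (2 * p + 1)
      = ∑ β ∈ I.image (fun i => |x i|), (xiF I x β : ℝ) * β ^ (2 * p + 1) := by
  rw [← Finset.sum_fiberwise_of_maps_to (g := fun i => |x i|)
      (fun i hi => Finset.mem_image_of_mem (fun i => |x i|) hi) (fun i => x i ^ (2 * p + 1))]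
  refine Finset.sum_congr rfl fun β hβ => ?_
  by_cases hβ0 : β = 0
  · subst hβ0
    rw [Finset.sum_eq_zero, xiF_zero]
    · simp
    · intro i hi
      simp only [Finset.mem_filter, abs_eq_zero] at hi
      rw [hi.2]; simp
  · have hβpos : 0 ≤ β := by
      obtain ⟨i, _, hi⟩ := Finset.mem_image.1 hβ
      rw [← hi]; exact abs_nonneg _
    have hsplit : I.filter (fun i => |x i| = β)
        = I.filter (fun i => x i = β) ∪ I.filter (fun i => x i = -β) := by
      rw [← Finset.filter_or]
      exact Finset.filter_congr fun i _ => by rw [abs_eq hβpos]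
    have hdisj : Disjoint (I.filter (fun i => x i = β)) (I.filter (fun i => x i = -β)) := by
      rw [Finset.disjoint_left]
      intro i h1 h2
      simp only [Finset.mem_filter] at h1 h2
      exact hβ0 (by linarith [h1.2 ▸ h2.2])
    rw [hsplit, Finset.sum_union hdisj]
    have e1 : ∑ i ∈ I.filter (fun i => x i = β), x i ^ (2 * p + 1)
        = ((I.filter (fun i => x i = β)).card : ℝ) * β ^ (2 * p + 1) := by
      rw [Finset.sum_congr rfl (fun i hi => by
        rw [(Finset.mem_filter.1 hi).2]), Finset.sum_const, nsmul_eq_mul]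
    have e2 : ∑ i ∈ I.filter (fun i => x i = -β), x i ^ (2 * p + 1)
        = -(((I.filter (fun i => x i = -β)).card : ℝ) * β ^ (2 * p + 1)) := by
      rw [Finset.sum_congr rfl (fun i hi => by
        rw [(Finset.mem_filter.1 hi).2]), Finset.sum_const, nsmul_eq_mul,
        Odd.neg_pow ⟨p, by ring⟩]
      ring
    rw [e1, e2, xiF]
    push_cast
    ring



lemma aux_exp_tendsto : Filter.Tendsto (fun p : ℕ => (((2 * p + 1 : ℕ) : ℝ))⁻¹)
    Filter.atTop (nhds 0) := by
  apply Filter.Tendsto.comp tendsto_inv_atTop_zero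
  apply Filter.Tendsto.comp tendsto_natCast_atTop_atTop
  exact StrictMono.tendsto_atTop (fun a b hab => by omega)

lemma aux_rpow_tendsto (a : ℝ) (ha : 0 < a) :
    Filter.Tendsto (fun p : ℕ => a ^ ((((2 * p + 1 : ℕ) : ℝ))⁻¹)) Filter.atTop (nhds 1) := by
  have h := (Real.continuousAt_const_rpow (b := (0:ℝ)) (ne_of_gt ha)).tendsto.comp
    aux_exp_tendsto
  simpa [Real.rpow_zero, Function.comp_def] using h

lemma aux_oddpow_inj (p : ℕ) : Function.Injective (fun a : ℝ => a ^ (2 * p + 1)) :=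
  (Odd.strictMono_pow (R := ℝ) ⟨p, by ring⟩).injective

lemma aux_natTendsto : Filter.Tendsto (fun p : ℕ => 2 * p + 1) Filter.atTop Filter.atTop :=
  StrictMono.tendsto_atTop (fun a b hab => by omega)

theorem tendsto_FF {ι : Type*} [Fintype ι] (x : ι → ℝ) (r : ℕ → ℝ)
    (hr : ∀ p : ℕ, r p ^ (2 * p + 1) = ∑ i : ι, x i ^ (2 * p + 1)) :
    Filter.Tendsto r Filter.atTop (nhds (FF Finset.univ x)) := by
  set I : Finset ι := Finset.univ with hI
  set J : Finset ι := I.filter (fun j => xiF I x (x j) ≠ 0) with hJ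
  set B : Finset ℝ := I.image (fun i => |x i|) with hB
  set B' : Finset ℝ := B.filter (fun β => xiF I x β ≠ 0) with hB'
  -- sum reduces to B'
  have hSB' : ∀ p : ℕ, r p ^ (2 * p + 1)
      = ∑ β ∈ B', (xiF I x β : ℝ) * β ^ (2 * p + 1) := by
    intro p
    rw [hr p, key_sum I x p, hB']
    exact (Finset.sum_filter_of_ne (fun β _ hne => by
      intro h0; apply hne; rw [h0]; simp)).symm
  by_cases h : J.Nonempty
  · -- main case
    set M : ℝ := J.sup' h (fun i => |x i|) with hM
    obtain ⟨j, hjJ, hjM⟩ := Finset.exists_mem_eq_sup' h (fun i => |x i|)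
    have hjx : xiF I x (x j) ≠ 0 := (Finset.mem_filter.1 hjJ).2
    have hMpos : 0 < M := by
      rw [hM, hjM, abs_pos]
      intro h0
      rw [h0, xiF_zero] at hjx
      exact hjx rfl
    have hxiM : xiF I x M ≠ 0 := by
      rw [hM, hjM, xiF_abs_ne]; exact hjx
    have hMB' : M ∈ B' := by
      rw [hB', Finset.mem_filter]
      refine ⟨?_, hxiM⟩
      rw [hB, hM, hjM]
      exact Finset.mem_image_of_mem (fun i => |x i|) (Finset.mem_univ j)
    have hmemJ : ∀ β ∈ B', β ≤ M := by
      intro β hβ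
      rw [hB', Finset.mem_filter] at hβ
      obtain ⟨i, _, hiβ⟩ := Finset.mem_image.1 hβ.1
      have hiJ : i ∈ J := by
        rw [hJ, Finset.mem_filter]
        refine ⟨Finset.mem_univ i, ?_⟩
        rw [← xiF_abs_ne, hiβ]
        exact hβ.2
      calc β = |x i| := hiβ.symm
        _ ≤ M := Finset.le_sup' (fun i => |x i|) hiJ
    have hnonneg : ∀ β ∈ B', 0 ≤ β := by
      intro β hβ
      rw [hB', Finset.mem_filter] at hβ
      obtain ⟨i, _, hiβ⟩ := Finset.mem_image.1 hβ.1
      rw [← hiβ]; exact abs_nonneg _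
    -- the "second largest" bound
    set E : Finset ℝ := B'.erase M with hE
    set q : ℝ := (insert (0:ℝ) E).sup' (Finset.insert_nonempty _ _) id with hq
    have hq0 : 0 ≤ q := Finset.le_sup' id (Finset.mem_insert_self 0 E)
    have hqM : q < M := by
      rw [hq, Finset.sup'_lt_iff]
      intro β hβ
      rcases Finset.mem_insert.1 hβ with h0 | hβE
      · simpa [h0] using hMpos
      · have := hmemJ β (Finset.mem_of_mem_erase hβE)
        exact lt_of_le_of_ne this (Finset.ne_of_mem_erase hβE)
    have hβq : ∀ β ∈ E, β ≤ q := fun β hβ =>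
      Finset.le_sup' id (Finset.mem_insert_of_mem hβ)
    set C : ℝ := ∑ β ∈ E, |(xiF I x β : ℝ)| with hC
    set R : ℕ → ℝ := fun p => ∑ β ∈ E, (xiF I x β : ℝ) * β ^ (2 * p + 1) with hRdef
    have hsplit : ∀ p : ℕ, r p ^ (2 * p + 1)
        = (xiF I x M : ℝ) * M ^ (2 * p + 1) + R p := by
      intro p
      rw [hSB' p, ← Finset.add_sum_erase _ _ hMB']
    have hRbound : ∀ p : ℕ, |R p| ≤ C * q ^ (2 * p + 1) := by
      intro p
      calc |R p| ≤ ∑ β ∈ E, |(xiF I x β : ℝ) * β ^ (2 * p + 1)| :=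
            Finset.abs_sum_le_sum_abs _ _
        _ ≤ ∑ β ∈ E, |(xiF I x β : ℝ)| * q ^ (2 * p + 1) := by
            refine Finset.sum_le_sum fun β hβ => ?_
            rw [abs_mul]
            refine mul_le_mul_of_nonneg_left ?_ (abs_nonneg _)
            have h0β : 0 ≤ β := hnonneg β (Finset.mem_of_mem_erase hβ)
            rw [abs_pow, abs_of_nonneg h0β]
            exact pow_le_pow_left₀ h0β (hβq β hβ) _
        _ = C * q ^ (2 * p + 1) := by rw [hC, Finset.sum_mul]
    -- sign and limit value
    set s : ℝ := if 0 < xiF I x M then 1 else -1 with hs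
    set L : ℝ := s * M with hL
    have hs2 : s * s = 1 := by rw [hs]; split <;> norm_num
    have hsabs : s * (xiF I x M : ℝ) = |(xiF I x M : ℝ)| := by
      rw [hs]
      rcases lt_trichotomy (xiF I x M) 0 with hlt | heq | hgt
      · rw [if_neg (by omega), abs_of_neg (by exact_mod_cast hlt)]; ring
      · exact absurd heq hxiM
      · rw [if_pos hgt, abs_of_pos (by exact_mod_cast hgt)]; ring
    have hL0 : L ≠ 0 := by
      rw [hL, hs]
      split <;> [skip; skip] <;> intro hc <;> nlinarith
    have hFF : FF I x = L := by
      unfold FF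
      rw [dif_pos h]
      have hMeq : ((I.filter fun j => xiF I x (x j) ≠ 0).sup' h fun i => |x i|) = M := rfl
      rw [hMeq]
      by_cases hpos : 0 < xiF I x M
      · rw [if_pos hpos]
        have hs1 : s = 1 := by rw [hs, if_pos hpos]
        rw [hL, hs1, one_mul]
        apply le_antisymm
        · exact Finset.sup'_le h x fun i hi =>
            le_trans (le_abs_self _) (Finset.le_sup' (fun i => |x i|) hi)
        · have hcard : 0 < (I.filter fun i => x i = M).card := by
            simp only [xiF] at hpos; omega
          obtain ⟨i, hi⟩ := Finset.card_pos.1 hcard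
          have hxi : x i = M := (Finset.mem_filter.1 hi).2
          have hiJ : i ∈ J := Finset.mem_filter.2
            ⟨Finset.mem_univ i, by rw [hxi]; exact hxiM⟩
          calc M = x i := hxi.symm
            _ ≤ J.sup' h x := Finset.le_sup' x hiJ
      · have hneg : xiF I x M < 0 := lt_of_le_of_ne (not_lt.1 hpos) hxiM
        rw [if_neg hpos, if_pos hneg]
        have hs1 : s = -1 := by rw [hs, if_neg hpos]
        rw [hL, hs1]
        apply le_antisymm
        · have hcard : 0 < (I.filter fun i => x i = -M).card := by
            simp only [xiF] at hneg; omega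
          obtain ⟨i, hi⟩ := Finset.card_pos.1 hcard
          have hxi : x i = -M := (Finset.mem_filter.1 hi).2
          have hiJ : i ∈ J := Finset.mem_filter.2
            ⟨Finset.mem_univ i, by rw [hxi, xiF_neg]; simpa using hxiM⟩
          calc J.inf' h x ≤ x i := Finset.inf'_le x hiJ
            _ = -1 * M := by rw [hxi]; ring
        · refine Finset.le_inf' h x fun i hi => ?_
          have h1 : |x i| ≤ M := Finset.le_sup' (fun i => |x i|) hi
          have := neg_abs_le (x i)
          linarith
    -- analysis
    have hξabs1 : (1:ℝ) ≤ |(xiF I x M : ℝ)| := by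
      rw [← Int.cast_abs]
      exact_mod_cast Int.one_le_abs (by omega)
    set w : ℕ → ℝ := fun p => |(xiF I x M : ℝ)| + s * (R p / M ^ (2 * p + 1)) with hw
    have hupow : ∀ p : ℕ, (r p / L) ^ (2 * p + 1) = w p := by
      intro p
      have hsodd : s ^ (2 * p + 1) = s := by
        rw [hs]; split
        · exact one_pow _
        · exact Odd.neg_one_pow ⟨p, by ring⟩
      have hMne : M ^ (2 * p + 1) ≠ 0 := pow_ne_zero _ (ne_of_gt hMpos)
      have hLK : L ^ (2 * p + 1) = s * M ^ (2 * p + 1) := by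
        rw [hL, mul_pow, hsodd]
      have hLKne : L ^ (2 * p + 1) ≠ 0 := pow_ne_zero _ hL0
      have hwL : w p * L ^ (2 * p + 1) = r p ^ (2 * p + 1) := by
        rw [hLK, hsplit p]
        calc (|(xiF I x M : ℝ)| + s * (R p / M ^ (2 * p + 1))) * (s * M ^ (2 * p + 1))
            = (s * (xiF I x M : ℝ)) * (s * M ^ (2 * p + 1))
              + (s * s) * (R p / M ^ (2 * p + 1) * M ^ (2 * p + 1)) := by
              rw [hsabs]; ring
          _ = (s * s) * ((xiF I x M : ℝ) * M ^ (2 * p + 1)) + (s * s) * R p := by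
              rw [div_mul_cancel₀ _ hMne]; ring
          _ = (xiF I x M : ℝ) * M ^ (2 * p + 1) + R p := by rw [hs2]; ring
      rw [div_pow, ← hwL, mul_div_cancel_right₀ _ hLKne]
    have hsabs1 : |s| = 1 := by
      rw [hs]; split <;> simp
    have hzero : Filter.Tendsto (fun p => s * (R p / M ^ (2 * p + 1)))
        Filter.atTop (nhds 0) := by
      have hg : Filter.Tendsto (fun p : ℕ => C * (q / M) ^ (2 * p + 1))
          Filter.atTop (nhds 0) := by
        have h1 := (tendsto_pow_atTop_nhds_zero_of_lt_one
          (by positivity : (0:ℝ) ≤ q / M) ((div_lt_one hMpos).2 hqM)).comp aux_natTendsto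
        simpa using h1.const_mul C
      refine squeeze_zero_norm (fun p => ?_) hg
      rw [Real.norm_eq_abs, abs_mul, hsabs1, one_mul, abs_div, abs_pow,
        abs_of_pos hMpos, div_pow]
      rw [div_le_iff₀ (by positivity)]
      calc |R p| ≤ C * q ^ (2 * p + 1) := hRbound p
        _ = C * (q ^ (2 * p + 1) / M ^ (2 * p + 1)) * M ^ (2 * p + 1) := by
            field_simp
    have hwlim : Filter.Tendsto w Filter.atTop (nhds |(xiF I x M : ℝ)|) := by
      have := hzero.const_add |(xiF I x M : ℝ)|
      simpa using this
    -- eventual bounds on w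
    have hev : ∀ᶠ p in Filter.atTop, (1:ℝ)/2 ≤ w p ∧ w p ≤ |(xiF I x M : ℝ)| + 1 := by
      filter_upwards [hwlim.eventually (eventually_gt_nhds (by linarith :
          (1:ℝ)/2 < |(xiF I x M : ℝ)|)),
        hwlim.eventually (eventually_lt_nhds (by linarith :
          |(xiF I x M : ℝ)| < |(xiF I x M : ℝ)| + 1))] with p h1 h2
      exact ⟨le_of_lt h1, le_of_lt h2⟩
    have hument : Filter.Tendsto (fun p => r p / L) Filter.atTop (nhds 1) := by
      have heq : ∀ᶠ p in Filter.atTop,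
          r p / L = (w p) ^ ((((2 * p + 1 : ℕ) : ℝ))⁻¹) := by
        filter_upwards [hev] with p hp
        have hwpos : 0 < w p := lt_of_lt_of_le (by norm_num) hp.1
        apply aux_oddpow_inj p
        show (r p / L) ^ (2 * p + 1)
          = ((w p) ^ ((((2 * p + 1 : ℕ) : ℝ))⁻¹)) ^ (2 * p + 1)
        rw [hupow p, ← Real.rpow_natCast ((w p) ^ ((((2 * p + 1 : ℕ) : ℝ))⁻¹)) (2 * p + 1),
          ← Real.rpow_mul (le_of_lt hwpos), inv_mul_cancel₀ (by positivity), Real.rpow_one]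
      refine tendsto_of_tendsto_of_tendsto_of_le_of_le'
        (aux_rpow_tendsto ((1:ℝ)/2) (by norm_num))
        (aux_rpow_tendsto (|(xiF I x M : ℝ)| + 1) (by linarith)) ?_ ?_
      · filter_upwards [hev, heq] with p hp hpe
        rw [hpe]
        exact Real.rpow_le_rpow (by norm_num) hp.1 (by positivity)
      · filter_upwards [hev, heq] with p hp hpe
        rw [hpe]
        exact Real.rpow_le_rpow (le_trans (by norm_num) hp.1) hp.2 (by positivity)
    have : Filter.Tendsto (fun p => L * (r p / L)) Filter.atTop (nhds (L * 1)) :=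
      hument.const_mul L
    rw [mul_one] at this
    rw [hFF]
    refine this.congr fun p => ?_
    rw [mul_comm, div_mul_cancel₀ _ hL0]
  · -- degenerate case
    have hFF0 : FF I x = 0 := by rw [FF, dif_neg h]
    have hB'empty : B' = ∅ := by
      rw [Finset.eq_empty_iff_forall_notMem]
      intro β hβ
      rw [hB', Finset.mem_filter] at hβ
      obtain ⟨i, _, hiβ⟩ := Finset.mem_image.1 hβ.1
      apply h
      refine ⟨i, Finset.mem_filter.2 ⟨Finset.mem_univ i, ?_⟩⟩
      rw [← xiF_abs_ne, hiβ]
      exact hβ.2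
    have hr0 : ∀ p, r p = 0 := by
      intro p
      have := hSB' p
      rw [hB'empty, Finset.sum_empty] at this
      exact pow_eq_zero_iff (by omega) |>.1 this
    rw [hFF0]
    exact Filter.Tendsto.congr (fun p => (hr0 p).symm) tendsto_const_nhds

theorem stmt_13 {n : ℕ} (A : Matrix (Fin n) (Fin n) ℝ) (r : ℕ → ℝ)
    (hr : ∀ p : ℕ, (r p) ^ (2 * p + 1) =
      ∑ σ : Equiv.Perm (Fin n),
        ((Equiv.Perm.sign σ : ℤ) : ℝ) * ∏ i, (A i (σ i)) ^ (2 * p + 1)) :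
    Filter.Tendsto r Filter.atTop (nhds (detInf A)) := by
  have key := tendsto_FF
    (fun σ : Equiv.Perm (Fin n) => ((Equiv.Perm.sign σ : ℤ) : ℝ) * ∏ i, A i (σ i)) r ?_
  · exact key
  · intro p
    rw [hr p]
    refine Finset.sum_congr rfl fun σ _ => ?_
    rw [mul_pow, ← Finset.prod_pow]
    congr 1
    rcases Int.units_eq_one_or (Equiv.Perm.sign σ) with h | h <;> rw [h]
    · norm_num
    · push_cast
      exact (Odd.neg_one_pow ⟨p, by ring⟩).symm
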